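/- Let C_a, C_t, N_a be positive reals, let J ≥ 3 be an odd natural number, and let x > 0. Then the limit as s → 0⁺ of Q_x(J)/Q_x((J+1)/2) equals x^{1−J} (equation (24): in the high transmit power regime the received-power gain of deploying the active IRS last over deploying it at the middle IRS equals x^{1−J}). -/

import Mathlib

open Real Filter

/-- Received power in the multi-IRS WPT system, as a function of the AIRS index `l`:
`Q_x(l) = (C_a·C_t·N_a·x^{2(J−1)} + s·C_a·x^{2(J−l)}) / (C_t·x^{2(l−1)} + s)`. -/
noncomputable def Qrec (Ca Ct Na s : ℝ) (J : ℕ) (x l : ℝ) : ℝ :=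
  (Ca * Ct * Na * x ^ (2 * ((J : ℝ) - 1)) + s * Ca * x ^ (2 * ((J : ℝ) - l))) /
    (Ct * x ^ (2 * (l - 1)) + s)

/-- Equation (24): for odd `J ≥ 3` and `x > 0`, as the noise power `s → 0⁺`, the
received-power gain of deploying the AIRS last over deploying it at the middle IRS,
`Q_x(J)/Q_x((J+1)/2)`, tends to `x^{1−J}`. -/
theorem stmt_17 (Ca Ct Na : ℝ) (hCa : 0 < Ca) (hCt : 0 < Ct) (hNa : 0 < Na)
    (J : ℕ) (hJ : 3 ≤ J) (hJodd : Odd J) (x : ℝ) (hx0 : 0 < x) :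
    Tendsto (fun s : ℝ =>
        Qrec Ca Ct Na s J x (J : ℝ) / Qrec Ca Ct Na s J x (((J : ℝ) + 1) / 2))
      (nhdsWithin 0 (Set.Ioi 0)) (nhds (x ^ (1 - (J : ℝ)))) := by
  have hX : (0:ℝ) < x ^ (2 * ((J:ℝ) - 1)) := rpow_pos_of_pos hx0 _
  have hY : (0:ℝ) < x ^ ((J:ℝ) - 1) := rpow_pos_of_pos hx0 _
  have h1 : 2 * (((J:ℝ) + 1) / 2 - 1) = (J:ℝ) - 1 := by ring
  have h2 : 2 * ((J:ℝ) - ((J:ℝ) + 1) / 2) = (J:ℝ) - 1 := by ring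
  have h3 : 2 * ((J:ℝ) - (J:ℝ)) = 0 := by ring
  have hcont : ContinuousAt (fun s : ℝ =>
      Qrec Ca Ct Na s J x (J : ℝ) / Qrec Ca Ct Na s J x (((J : ℝ) + 1) / 2)) 0 := by
    unfold Qrec
    apply ContinuousAt.div
    · apply ContinuousAt.div
      · fun_prop
      · fun_prop
      · positivity
    · apply ContinuousAt.div
      · fun_prop
      · fun_prop
      · positivity
    · rw [h1, h2]
      simp only [zero_mul, add_zero]
      have hnum : Ca * Ct * Na * x ^ (2 * ((J:ℝ) - 1)) ≠ 0 := by positivity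
      have hden : Ct * x ^ ((J:ℝ) - 1) ≠ 0 := by positivity
      exact div_ne_zero hnum hden
  have hval : Qrec Ca Ct Na 0 J x (J : ℝ) / Qrec Ca Ct Na 0 J x (((J : ℝ) + 1) / 2)
      = x ^ (1 - (J:ℝ)) := by
    unfold Qrec
    rw [h1, h2]
    simp only [zero_mul, add_zero, zero_add]
    rw [div_div_div_comm]
    have hx2 : x ^ (2 * ((J:ℝ) - 1)) = x ^ ((J:ℝ) - 1) * x ^ ((J:ℝ) - 1) := by
      rw [← rpow_add hx0]; ring_nf
    have hinv : x ^ (1 - (J:ℝ)) = (x ^ ((J:ℝ) - 1))⁻¹ := by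
      rw [← rpow_neg hx0.le]
      ring_nf
    rw [hx2, hinv]
    field_simp
  have := hcont.tendsto
  rw [hval] at this
  exact this.mono_left nhdsWithin_le_nhds
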